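/- Let k be a nonnegative integer, let G be a finite simple graph with n ≥ 1 vertices, let 𝒯 = (T, {X_t}) be a tree decomposition of G with μ(𝒯) ≤ k, and let t be a node of T. Then the number of distinct sets of the form I ∩ X_t, where I ranges over all inclusion-wise maximal independent sets of G, is at most n^{3k}. -/

import Mathlib

open SimpleGraph

namespace Paper

/-- A tree decomposition of a graph `G`. -/
structure TreeDecomp {V : Type} (G : SimpleGraph V) where
  ι : Type
  fin : Fintype ι
  tree : SimpleGraph ι
  isTree : tree.IsTree
  bag : ι → Set V
  mem_bag : ∀ v : V, ∃ t, v ∈ bag t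
  edge_bag : ∀ ⦃u w : V⦄, G.Adj u w → ∃ t, u ∈ bag t ∧ w ∈ bag t
  coherent : ∀ v : V, (tree.induce {t | v ∈ bag t}).Connected

/-- `M` is an induced matching in `G`: a set of edges, pairwise disjoint,
with no edge of `G` joining endpoints of distinct edges of `M`. -/
def IsInducedMatching {V : Type} (G : SimpleGraph V) (M : Finset (V × V)) : Prop :=
  (∀ p ∈ M, G.Adj p.1 p.2) ∧
    ∀ p ∈ M, ∀ q ∈ M, p ≠ q →
      (p.1 ≠ q.1 ∧ p.1 ≠ q.2 ∧ p.2 ≠ q.1 ∧ p.2 ≠ q.2) ∧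
      (¬ G.Adj p.1 q.1 ∧ ¬ G.Adj p.1 q.2 ∧ ¬ G.Adj p.2 q.1 ∧ ¬ G.Adj p.2 q.2)

/-- Every edge of `M` has an endpoint in `X`. -/
def Touches {V : Type} (M : Finset (V × V)) (X : Set V) : Prop :=
  ∀ p ∈ M, p.1 ∈ X ∨ p.2 ∈ X

/-- μ(𝒯): the maximum size of an induced matching of `G` all of whose edges
touch a common bag of the tree decomposition `D`. -/
noncomputable def mu {V : Type} (G : SimpleGraph V) (D : TreeDecomp G) : ℕ :=
  sSup {n | ∃ (t : D.ι) (M : Finset (V × V)),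
    IsInducedMatching G M ∧ Touches M (D.bag t) ∧ M.card = n}

/-- Induced matching treewidth: minimum of μ(𝒯) over tree decompositions. -/
noncomputable def treeMu {V : Type} (G : SimpleGraph V) : ℕ :=
  sInf {n | ∃ D : TreeDecomp G, mu G D = n}

/-- `S` is an independent set of `G`. -/
def IsIndepSet {V : Type} (G : SimpleGraph V) (S : Finset V) : Prop :=
  ∀ u ∈ S, ∀ v ∈ S, u ≠ v → ¬ G.Adj u v

/-- α(𝒯): the maximum size of an independent set of `G` contained in a bag. -/
noncomputable def alphaTD {V : Type} (G : SimpleGraph V) (D : TreeDecomp G) : ℕ :=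
  sSup {n | ∃ (t : D.ι) (S : Finset V),
    IsIndepSet G S ∧ ↑S ⊆ D.bag t ∧ S.card = n}

/-- Tree-independence number: minimum of α(𝒯) over tree decompositions. -/
noncomputable def treeAlpha {V : Type} (G : SimpleGraph V) : ℕ :=
  sInf {n | ∃ D : TreeDecomp G, alphaTD G D = n}

/-- The `k`-th power of `G`: distinct vertices adjacent iff their distance in `G`
is at most `k` (for `k = 0` this is the edgeless graph). -/
def power {V : Type} (G : SimpleGraph V) (k : ℕ) : SimpleGraph V :=
  SimpleGraph.fromRel (fun u v => G.Reachable u v ∧ G.dist u v ≤ k)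

/-- The graph `G°[ℋ]` for a family `ℋ = {H j}` of subgraphs of `G`: vertices are
indices `j`, two distinct indices adjacent iff the subgraphs share a vertex or
there is an edge of `G` between them. -/
def blowup {V J : Type} (G : SimpleGraph V) (H : J → G.Subgraph) : SimpleGraph J :=
  SimpleGraph.fromRel (fun i j =>
    ((H i).verts ∩ (H j).verts).Nonempty ∨
      ∃ u ∈ (H i).verts, ∃ v ∈ (H j).verts, G.Adj u v)


/-- `I` is an inclusion-wise maximal independent set of `G`. -/
def IsMaxIndep {V : Type} (G : SimpleGraph V) (I : Set V) : Prop :=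
  (∀ u ∈ I, ∀ v ∈ I, u ≠ v → ¬ G.Adj u v) ∧
    ∀ I' : Set V, I ⊆ I' → (∀ u ∈ I', ∀ v ∈ I', u ≠ v → ¬ G.Adj u v) → I' = I

section TraceCount

open Finset

attribute [local instance] Classical.propDecidable

variable {V : Type} [Fintype V] (G : SimpleGraph V)

/-- `x` avoids the closed neighborhoods of `u` and `b`. -/
def ZFree (u b x : V) : Prop :=
  x ≠ u ∧ x ≠ b ∧ ¬ G.Adj u x ∧ ¬ G.Adj b x

/-- the residual alive set after one level with records `(u,b,c)`. -/
noncomputable def resid (X W : Finset V) (u b c : V) : Finset V :=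
  W.filter (fun z => ZFree G u b z ∧ ¬(z ∈ X ∧ G.Adj c z))

/-- `J` is independent and dominates `X ∩ W`. -/
def DomOn (X W J : Finset V) : Prop :=
  J ⊆ W ∧ (∀ u ∈ J, ∀ v ∈ J, ¬ G.Adj u v) ∧
    ∀ x ∈ X, x ∈ W → x ∉ J → ∃ y ∈ J, G.Adj x y

/-- the set of traces on `X` of X-dominating independent sets of the alive set `W`. -/
noncomputable def tr (X W : Finset V) : Finset (Finset V) :=
  Finset.univ.filter (fun S => ∃ J, DomOn G X W J ∧ S = J ∩ (X ∩ W))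

/-- trace reconstruction from records `(u,b,c)` and a deeper trace `S'`. -/
noncomputable def recov (X W : Finset V) (u b c : V) (S' : Finset V) : Finset V :=
  ((X ∩ W).filter (fun v => v = u ∨ (G.Adj b v ∧ v ≠ u ∧ ¬ G.Adj u v ∧ ¬ G.Adj c v ∧
      ∀ y ∈ S', ¬ G.Adj v y))) ∪ S'

/-- Key existence lemma: a good triple of records always exists. -/
lemma exists_triple (X W J : Finset V)
    (hJW : J ⊆ W) (hind : ∀ u ∈ J, ∀ v ∈ J, ¬ G.Adj u v)
    (hdom : ∀ x ∈ X, x ∈ W → x ∉ J → ∃ y ∈ J, G.Adj x y)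
    {b₀ : V} (hb₀X : b₀ ∈ X) (hb₀W : b₀ ∈ W) (hb₀J : b₀ ∉ J) :
    ∃ u b c, u ∈ J ∧ b ∈ X ∧ b ∈ W ∧ b ∉ J ∧ G.Adj u b ∧
      (∀ v ∈ J, v ∈ X → ¬ G.Adj c v) ∧
      (∀ x ∈ X, x ∈ W → x ∉ J → ZFree G u b x → ¬ G.Adj c x →
          ∃ y ∈ J, ZFree G u b y ∧ G.Adj x y) ∧
      (∀ v ∈ X, v ∈ W → v ∉ J → G.Adj b v → v ≠ u → ¬ G.Adj u v → ¬ G.Adj c v →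
          ∃ y ∈ J, y ∈ X ∧ ZFree G u b y ∧ G.Adj v y) := by
  classical
  set T : Finset V := (X ∩ W) \ J with hT
  have hb₀T : b₀ ∈ T := by simp [hT, hb₀X, hb₀W, hb₀J]
  set wf : V → Finset V := fun x => J.filter (fun y => G.Adj x y) with hwf
  set wX : V → Finset V := fun x => J.filter (fun y => G.Adj x y ∧ y ∈ X) with hwX
  have hTmem : ∀ x ∈ T, x ∈ X ∧ x ∈ W ∧ x ∉ J := by
    intro x hx
    simp only [hT, Finset.mem_sdiff, Finset.mem_inter] at hx
    exact ⟨hx.1.1, hx.1.2, hx.2⟩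
  by_cases hcase : ∃ x ∈ T, wX x = ∅
  · -- Case 1 : some x has no X-witness
    set T0 : Finset V := T.filter (fun x => wX x = ∅) with hT0
    have hT0ne : T0.Nonempty := by
      obtain ⟨x, hx, hxe⟩ := hcase
      exact ⟨x, by simp [hT0, hx, hxe]⟩
    have hfam : (T0.image wf).Nonempty := hT0ne.image _
    obtain ⟨m, hm, hmin⟩ : ∃ m ∈ T0.image wf, ∀ x ∈ T0.image wf, ¬ x < m := by
      obtain ⟨m, hm⟩ := Finset.exists_minimal hfam
      exact ⟨m, hm.1, fun x hx hlt => hlt.not_ge (hm.2 hx hlt.le)⟩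
    obtain ⟨b, hbT0, hbm⟩ := Finset.mem_image.mp hm
    have hbT : b ∈ T := (Finset.mem_filter.mp hbT0).1
    have hbwX : wX b = ∅ := (Finset.mem_filter.mp hbT0).2
    obtain ⟨hbX, hbW, hbJ⟩ := hTmem b hbT
    obtain ⟨u, huJ, hub⟩ := hdom b hbX hbW hbJ
    have huwf : u ∈ wf b := by simp [hwf, huJ, hub]
    refine ⟨u, b, b, huJ, hbX, hbW, hbJ, hub.symm, ?_, ?_, ?_⟩
    · -- soundness of c = b
      intro v hvJ hvX hadj
      have : v ∈ wX b := by simp [hwX, hvJ, hadj, hvX]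
      simp [hbwX] at this
    · -- α
      intro x hxX hxW hxJ hzf hcx
      by_contra hcon
      push_neg at hcon
      have hsub : wf x ⊆ wf b := by
        intro y hy
        simp only [hwf, Finset.mem_filter] at hy ⊢
        refine ⟨hy.1, ?_⟩
        by_contra hby
        have hzfy : ZFree G u b y := by
          refine ⟨?_, ?_, ?_, hby⟩
          · rintro rfl; exact hzf.2.2.1 hy.2.symm
          · rintro rfl; exact hbJ hy.1
          · exact hind u huJ y hy.1
        exact (hcon y hy.1 hzfy) hy.2
      have hxT0 : x ∈ T0 := by
        have hxT : x ∈ T := by simp [hT, hxX, hxW, hxJ]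
        have : wX x = ∅ := by
          apply Finset.eq_empty_of_forall_notMem
          intro y hy
          simp only [hwX, Finset.mem_filter] at hy
          have : y ∈ wf b := hsub (by simp [hwf, hy.1, hy.2.1])
          have : y ∈ wX b := by
            simp only [hwf, Finset.mem_filter] at this
            simp [hwX, this.1, this.2, hy.2.2]
          simp [hbwX] at this
        simp [hT0, hxT, this]
      have hux : u ∉ wf x := by
        simp only [hwf, Finset.mem_filter]
        rintro ⟨-, h⟩
        exact hzf.2.2.1 h.symm
      have hlt : wf x < wf b := by
        rw [Finset.lt_iff_ssubset]
        exact Finset.ssubset_iff_of_subset hsub |>.mpr ⟨u, hbm ▸ (hbm ▸ huwf), hux⟩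
      exact hmin (wf x) (Finset.mem_image_of_mem wf hxT0) (hbm ▸ hlt)
    · -- β : with c = b immediate
      intro v hvX hvW hvJ hbv hvu huv hcv
      exact absurd hbv hcv
  · -- Case 2 : every x in T has an X-witness
    push_neg at hcase
    have hfam : (T.image wX).Nonempty := ⟨wX b₀, Finset.mem_image_of_mem _ hb₀T⟩
    obtain ⟨m, hm, hmin⟩ : ∃ m ∈ T.image wX, ∀ x ∈ T.image wX, ¬ x < m := by
      obtain ⟨m, hm⟩ := Finset.exists_minimal hfam
      exact ⟨m, hm.1, fun x hx hlt => hlt.not_ge (hm.2 hx hlt.le)⟩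
    obtain ⟨b, hbT, hbm⟩ := Finset.mem_image.mp hm
    obtain ⟨hbX, hbW, hbJ⟩ := hTmem b hbT
    have hne : wX b ≠ ∅ := Finset.nonempty_iff_ne_empty.mp (hcase b hbT)
    obtain ⟨u, hu⟩ := Finset.nonempty_iff_ne_empty.mpr hne
    simp only [hwX, Finset.mem_filter] at hu
    obtain ⟨huJ, hbu, huX⟩ := hu
    have huwXb : u ∈ wX b := by simp [hwX, huJ, hbu, huX]
    refine ⟨u, b, u, huJ, hbX, hbW, hbJ, hbu.symm, ?_, ?_, ?_⟩
    · -- soundness of c = u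
      intro v hvJ hvX hadj
      exact hind u huJ v hvJ hadj
    · -- α
      intro x hxX hxW hxJ hzf hcx
      by_contra hcon
      push_neg at hcon
      have hxT : x ∈ T := by simp [hT, hxX, hxW, hxJ]
      have hsub : wX x ⊆ wX b := by
        intro y hy
        simp only [hwX, Finset.mem_filter] at hy ⊢
        refine ⟨hy.1, ?_, hy.2.2⟩
        by_contra hby
        have hzfy : ZFree G u b y := by
          refine ⟨?_, ?_, ?_, hby⟩
          · rintro rfl; exact hzf.2.2.1 hy.2.1.symm
          · rintro rfl; exact hbJ hy.1
          · exact hind u huJ y hy.1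
        exact (hcon y hy.1 hzfy) hy.2.1
      have hux : u ∉ wX x := by
        simp only [hwX, Finset.mem_filter]
        rintro ⟨-, h, -⟩
        exact hzf.2.2.1 h.symm
      have hlt : wX x < wX b := by
        rw [Finset.lt_iff_ssubset]
        exact Finset.ssubset_iff_of_subset hsub |>.mpr ⟨u, huwXb, hux⟩
      exact hmin (wX x) (Finset.mem_image_of_mem wX hxT) (hbm ▸ hlt)
    · -- β
      intro v hvX hvW hvJ hbv hvu huv hcv
      by_contra hcon
      push_neg at hcon
      have hvT : v ∈ T := by simp [hT, hvX, hvW, hvJ]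
      have hsub : wX v ⊆ wX b := by
        intro y hy
        simp only [hwX, Finset.mem_filter] at hy ⊢
        refine ⟨hy.1, ?_, hy.2.2⟩
        by_contra hby
        have hzfy : ZFree G u b y := by
          refine ⟨?_, ?_, ?_, hby⟩
          · rintro rfl; exact huv hy.2.1.symm
          · rintro rfl; exact hbJ hy.1
          · exact hind u huJ y hy.1
        exact (hcon y hy.1 hy.2.2 hzfy) hy.2.1
      have hux : u ∉ wX v := by
        simp only [hwX, Finset.mem_filter]
        rintro ⟨-, h, -⟩
        exact huv h.symm
      have hlt : wX v < wX b := by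
        rw [Finset.lt_iff_ssubset]
        exact Finset.ssubset_iff_of_subset hsub |>.mpr ⟨u, huwXb, hux⟩
      exact hmin (wX v) (Finset.mem_image_of_mem wX hvT) (hbm ▸ hlt)

end TraceCount


/-- budget: every induced matching living in `W` and touching `X` has at most `k` edges. -/
def Bud {V : Type} (G : SimpleGraph V) (X W : Finset V) (k : ℕ) : Prop :=
  ∀ M : Finset (V × V), IsInducedMatching G M → (∀ p ∈ M, p.1 ∈ W ∧ p.2 ∈ W) →
    (∀ p ∈ M, p.1 ∈ X ∨ p.2 ∈ X) → M.card ≤ k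

section TraceCount2

open Finset

attribute [local instance] Classical.propDecidable

variable {V : Type} [Fintype V] (G : SimpleGraph V)

lemma bud_resid {X W : Finset V} {k : ℕ} {u b c : V}
    (hbud : Bud G X W (k+1)) (hadj : G.Adj u b) (hbX : b ∈ X) (huW : u ∈ W) (hbW : b ∈ W) :
    Bud G X (resid G X W u b c) k := by
  intro M' him hw ht
  have hres : ∀ z ∈ resid G X W u b c, z ∈ W ∧ ZFree G u b z := by
    intro z hz
    have := Finset.mem_filter.mp hz
    exact ⟨this.1, this.2.1⟩
  have hnm : (u, b) ∉ M' := by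
    intro h
    have := (hres _ (hw _ h).1).2
    exact this.1 rfl
  have himM : IsInducedMatching G (insert (u, b) M') := by
    constructor
    · intro p hp
      rcases Finset.mem_insert.mp hp with h | h
      · subst h; exact hadj
      · exact him.1 p h
    · intro p hp q hq hpq
      rcases Finset.mem_insert.mp hp with h1 | h1 <;> rcases Finset.mem_insert.mp hq with h2 | h2
      · exact absurd (h1.trans h2.symm) hpq
      · subst h1
        have z1 := (hres _ (hw _ h2).1).2
        have z2 := (hres _ (hw _ h2).2).2
        exact ⟨⟨(Ne.symm z1.1), (Ne.symm z2.1), (Ne.symm z1.2.1), (Ne.symm z2.2.1)⟩,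
          ⟨z1.2.2.1, z2.2.2.1, z1.2.2.2, z2.2.2.2⟩⟩
      · subst h2
        have z1 := (hres _ (hw _ h1).1).2
        have z2 := (hres _ (hw _ h1).2).2
        exact ⟨⟨z1.1, z1.2.1, z2.1, z2.2.1⟩,
          ⟨fun h => z1.2.2.1 h.symm, fun h => z1.2.2.2 h.symm,
           fun h => z2.2.2.1 h.symm, fun h => z2.2.2.2 h.symm⟩⟩
      · exact him.2 p h1 q h2 hpq
  have hwM : ∀ p ∈ insert (u, b) M', p.1 ∈ W ∧ p.2 ∈ W := by
    intro p hp
    rcases Finset.mem_insert.mp hp with h | h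
    · subst h; exact ⟨huW, hbW⟩
    · exact ⟨(hres _ (hw _ h).1).1, (hres _ (hw _ h).2).1⟩
  have htM : ∀ p ∈ insert (u, b) M', p.1 ∈ X ∨ p.2 ∈ X := by
    intro p hp
    rcases Finset.mem_insert.mp hp with h | h
    · subst h; exact Or.inr hbX
    · exact ht p h
  have := hbud _ himM hwM htM
  rw [Finset.card_insert_of_notMem hnm] at this
  omega

lemma dom_resid {X W J : Finset V} {u b c : V}
    (hJ : DomOn G X W J) (huJ : u ∈ J) (hbJ : b ∉ J)
    (hsound : ∀ v ∈ J, v ∈ X → ¬ G.Adj c v)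
    (halpha : ∀ x ∈ X, x ∈ W → x ∉ J → ZFree G u b x → ¬ G.Adj c x →
        ∃ y ∈ J, ZFree G u b y ∧ G.Adj x y) :
    DomOn G X (resid G X W u b c) (J ∩ resid G X W u b c) := by
  obtain ⟨hJW, hind, hdom⟩ := hJ
  refine ⟨Finset.inter_subset_right, ?_, ?_⟩
  · intro x hx y hy
    exact hind x (Finset.mem_inter.mp hx).1 y (Finset.mem_inter.mp hy).1
  · intro x hxX hxW' hxJ'
    have hxW := Finset.mem_filter.mp hxW'
    have hxJ : x ∉ J := fun h => hxJ' (Finset.mem_inter.mpr ⟨h, hxW'⟩)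
    have hcx : ¬ G.Adj c x := fun h => hxW.2.2 ⟨hxX, h⟩
    obtain ⟨y, hyJ, hyzf, hyadj⟩ := halpha x hxX hxW.1 hxJ hxW.2.1 hcx
    refine ⟨y, Finset.mem_inter.mpr ⟨hyJ, ?_⟩, hyadj⟩
    refine Finset.mem_filter.mpr ⟨hJW hyJ, hyzf, ?_⟩
    rintro ⟨hyX, hcy⟩
    exact hsound y hyJ hyX hcy

lemma recov_eq {X W J : Finset V} {u b c : V}
    (hJ : DomOn G X W J) (huJ : u ∈ J) (hbJ : b ∉ J)
    (hsound : ∀ v ∈ J, v ∈ X → ¬ G.Adj c v)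
    (hbeta : ∀ v ∈ X, v ∈ W → v ∉ J → G.Adj b v → v ≠ u → ¬ G.Adj u v → ¬ G.Adj c v →
        ∃ y ∈ J, y ∈ X ∧ ZFree G u b y ∧ G.Adj v y) :
    recov G X W u b c ((J ∩ resid G X W u b c) ∩ (X ∩ resid G X W u b c)) = J ∩ (X ∩ W) := by
  obtain ⟨hJW, hind, hdom⟩ := hJ
  set W' := resid G X W u b c with hW'
  set S' := (J ∩ W') ∩ (X ∩ W') with hS'
  have hS'mem : ∀ y, y ∈ S' ↔ (y ∈ J ∧ y ∈ X ∧ y ∈ W') := by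
    intro y
    simp only [hS', Finset.mem_inter]
    tauto
  ext v
  simp only [recov, Finset.mem_union, Finset.mem_filter, Finset.mem_inter]
  constructor
  · rintro (⟨⟨hvX, hvW⟩, h⟩ | hv)
    · rcases h with rfl | ⟨hbv, hvu, huvn, hcvn, hnoS⟩
      · exact ⟨huJ, hvX, hvW⟩
      · by_contra hcon
        have hvJ : v ∉ J := fun h => hcon ⟨h, hvX, hvW⟩
        obtain ⟨y, hyJ, hyX, hyzf, hyadj⟩ := hbeta v hvX hvW hvJ hbv hvu huvn hcvn
        have hyS' : y ∈ S' := by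
          rw [hS'mem]
          refine ⟨hyJ, hyX, Finset.mem_filter.mpr ⟨hJW hyJ, hyzf, ?_⟩⟩
          rintro ⟨hX2, hc2⟩
          exact hsound y hyJ hX2 hc2
        exact hnoS y hyS' hyadj
    · have := (hS'mem v).mp hv
      exact ⟨this.1, this.2.1, (Finset.mem_filter.mp this.2.2).1⟩
  · rintro ⟨hvJ, hvX, hvW⟩
    by_cases hvW' : v ∈ W'
    · exact Or.inr ((hS'mem v).mpr ⟨hvJ, hvX, hvW'⟩)
    · left
      refine ⟨⟨hvX, hvW⟩, ?_⟩
      by_cases hvu : v = u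
      · exact Or.inl hvu
      · right
        have hnz : ¬ (ZFree G u b v ∧ ¬(v ∈ X ∧ G.Adj c v)) := by
          intro h
          exact hvW' (Finset.mem_filter.mpr ⟨hvW, h⟩)
        have hcv : ¬ G.Adj c v := hsound v hvJ hvX
        have hzf : ¬ ZFree G u b v := by
          intro h
          exact hnz ⟨h, fun hh => hcv hh.2⟩
        have huvn : ¬ G.Adj u v := hind u huJ v hvJ
        have hbv : G.Adj b v := by
          by_contra hbv
          apply hzf
          refine ⟨hvu, ?_, huvn, hbv⟩
          rintro rfl; exact hbJ hvJ
        exact ⟨hbv, hvu, huvn, hcv, fun y hy => hind v hvJ y ((hS'mem y).mp hy).1⟩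

lemma card_tr_le [Nonempty V] (X : Finset V) :
    ∀ (k : ℕ) (W : Finset V), Bud G X W k →
      (tr G X W).card ≤ (Fintype.card V) ^ (3 * k) := by
  intro k
  induction k with
  | zero =>
    intro W hbud
    have : tr G X W ⊆ {X ∩ W} := by
      intro S hS
      obtain ⟨-, J, hJ, rfl⟩ := Finset.mem_filter.mp hS
      have hall : X ∩ W ⊆ J := by
        intro x hx
        by_contra hxJ
        have hxX := (Finset.mem_inter.mp hx).1
        have hxW := (Finset.mem_inter.mp hx).2
        obtain ⟨y, hyJ, hyadj⟩ := hJ.2.2 x hxX hxW hxJ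
        have h1 : IsInducedMatching G {(x, y)} := by
          constructor
          · intro p hp
            rw [Finset.mem_singleton] at hp
            subst hp; exact hyadj
          · intro p hp q hq hpq
            rw [Finset.mem_singleton] at hp hq
            exact absurd (hp.trans hq.symm) hpq
        have := hbud {(x, y)} h1 (by
          intro p hp
          rw [Finset.mem_singleton] at hp
          subst hp
          exact ⟨hxW, hJ.1 hyJ⟩) (by
          intro p hp
          rw [Finset.mem_singleton] at hp
          subst hp
          exact Or.inl hxX)
        simp at this
      rw [Finset.mem_singleton, Finset.inter_eq_right.mpr hall]
    calc (tr G X W).card ≤ ({X ∩ W} : Finset (Finset V)).card := Finset.card_le_card this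
    _ = 1 := Finset.card_singleton _
    _ = (Fintype.card V) ^ (3 * 0) := by simp
  | succ k ih =>
    intro W hbud
    set n := Fintype.card V with hn
    have hn1 : 1 ≤ n := Fintype.card_pos
    set P : Finset ((V × V) × V) := Finset.univ.offDiag ×ˢ Finset.univ with hP
    set A : ((V × V) × V) → Finset (Finset V) := fun p =>
      if h : G.Adj p.1.1 p.1.2 ∧ p.1.2 ∈ X ∧ p.1.1 ∈ W ∧ p.1.2 ∈ W then
        (tr G X (resid G X W p.1.1 p.1.2 p.2)).image (recov G X W p.1.1 p.1.2 p.2)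
      else ∅ with hA
    have hsub : tr G X W ⊆ insert (X ∩ W) (P.biUnion A) := by
      intro S hS
      obtain ⟨-, J, hJ, rfl⟩ := Finset.mem_filter.mp hS
      by_cases hall : X ∩ W ⊆ J
      · rw [Finset.inter_eq_right.mpr hall]
        exact Finset.mem_insert_self _ _
      · obtain ⟨b₀, hb₀, hb₀J⟩ := Finset.not_subset.mp hall
        have hb₀X := (Finset.mem_inter.mp hb₀).1
        have hb₀W := (Finset.mem_inter.mp hb₀).2
        obtain ⟨u, b, c, huJ, hbX, hbW, hbJ, hadj, hsound, halpha, hbeta⟩ :=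
          exists_triple G X W J hJ.1 hJ.2.1 hJ.2.2 hb₀X hb₀W hb₀J
        apply Finset.mem_insert_of_mem
        rw [Finset.mem_biUnion]
        refine ⟨((u, b), c), ?_, ?_⟩
        · rw [hP, Finset.mem_product]
          refine ⟨Finset.mem_offDiag.mpr ⟨Finset.mem_univ _, Finset.mem_univ _, ?_⟩,
            Finset.mem_univ _⟩
          show u ≠ b
          rintro rfl; exact hbJ huJ
        · have hcond : G.Adj u b ∧ b ∈ X ∧ u ∈ W ∧ b ∈ W := ⟨hadj, hbX, hJ.1 huJ, hbW⟩
          have hAeq : A ((u, b), c)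
              = (tr G X (resid G X W u b c)).image (recov G X W u b c) := dif_pos hcond
          rw [hAeq, Finset.mem_image]
          refine ⟨(J ∩ resid G X W u b c) ∩ (X ∩ resid G X W u b c), ?_, ?_⟩
          · rw [tr, Finset.mem_filter]
            exact ⟨Finset.mem_univ _,
              ⟨J ∩ resid G X W u b c,
               dom_resid G hJ huJ hbJ hsound halpha, rfl⟩⟩
          · exact recov_eq G hJ huJ hbJ hsound hbeta
    have hcardA : ∀ p ∈ P, (A p).card ≤ n ^ (3 * k) := by
      intro p _
      by_cases h : G.Adj p.1.1 p.1.2 ∧ p.1.2 ∈ X ∧ p.1.1 ∈ W ∧ p.1.2 ∈ W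
      · have hAeq : A p = (tr G X (resid G X W p.1.1 p.1.2 p.2)).image
            (recov G X W p.1.1 p.1.2 p.2) := dif_pos h
        rw [hAeq]
        calc ((tr G X (resid G X W p.1.1 p.1.2 p.2)).image _).card
            ≤ (tr G X (resid G X W p.1.1 p.1.2 p.2)).card := Finset.card_image_le
          _ ≤ n ^ (3 * k) := ih _ (bud_resid G hbud h.1 h.2.1 h.2.2.1 h.2.2.2)
      · have hAeq : A p = ∅ := dif_neg h
        rw [hAeq]; simp
    have hPcard : P.card = (n * n - n) * n := by
      rw [hP, Finset.card_product, Finset.offDiag_card]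
      simp [hn, Finset.card_univ]
    calc (tr G X W).card ≤ (insert (X ∩ W) (P.biUnion A)).card := Finset.card_le_card hsub
      _ ≤ (P.biUnion A).card + 1 := Finset.card_insert_le _ _
      _ ≤ (∑ p ∈ P, (A p).card) + 1 := by
          exact Nat.add_le_add_right (Finset.card_biUnion_le) 1
      _ ≤ (∑ _p ∈ P, n ^ (3 * k)) + 1 := by
          exact Nat.add_le_add_right (Finset.sum_le_sum hcardA) 1
      _ = (n * n - n) * n * n ^ (3 * k) + 1 := by
          rw [Finset.sum_const, hPcard, smul_eq_mul]
      _ ≤ n ^ (3 * (k + 1)) := by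
          have ha : 0 < n ^ (3 * k) := pow_pos hn1 _
          have hsubn : n ≤ n * n := Nat.le_mul_of_pos_left n hn1
          have hcancel : (n * n - n) + n = n * n := Nat.sub_add_cancel hsubn
          have h1b : 0 < n * (n * n ^ (3 * k)) := Nat.mul_pos hn1 (Nat.mul_pos hn1 ha)
          calc (n * n - n) * n * n ^ (3 * k) + 1
              ≤ (n * n - n) * (n * n ^ (3 * k)) + n * (n * n ^ (3 * k)) := by
                rw [mul_assoc]
                exact Nat.add_le_add_left h1b _
            _ = ((n * n - n) + n) * (n * n ^ (3 * k)) := (add_mul _ _ _).symm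
            _ = n ^ (3 * (k + 1)) := by
                rw [hcancel, show 3 * (k + 1) = (1 + 1) + (1 + 3 * k) by ring, pow_add, pow_add]
                ring

end TraceCount2

/-- if `μ(𝒯) ≤ k`, then the number of distinct traces `I ∩ X_t`
of maximal independent sets `I` on a bag `X_t` is at most `n^(3k)`. -/
theorem stmt18 {V : Type} [Fintype V] [Nonempty V] (k : ℕ) (G : SimpleGraph V)
    (D : TreeDecomp G) (hmu : mu G D ≤ k) (t : D.ι) :
    {S : Set V | ∃ I : Set V, IsMaxIndep G I ∧ S = I ∩ D.bag t}.ncard ≤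
      Fintype.card V ^ (3 * k) := by
  classical
  set X : Finset V := (D.bag t).toFinite.toFinset with hXdef
  have hXmem : ∀ x, x ∈ X ↔ x ∈ D.bag t := fun x => Set.Finite.mem_toFinset _
  have hbud : Bud G X (Finset.univ) k := by
    intro M him hw ht
    have hmem : M.card ∈ {n | ∃ (t' : D.ι) (M' : Finset (V × V)),
        IsInducedMatching G M' ∧ Touches M' (D.bag t') ∧ M'.card = n} := by
      refine ⟨t, M, him, ?_, rfl⟩
      intro p hp
      rcases ht p hp with h | h
      · exact Or.inl ((hXmem _).mp h)
      · exact Or.inr ((hXmem _).mp h)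
    have hbdd : BddAbove {n | ∃ (t' : D.ι) (M' : Finset (V × V)),
        IsInducedMatching G M' ∧ Touches M' (D.bag t') ∧ M'.card = n} := by
      refine ⟨Fintype.card (V × V), ?_⟩
      rintro m ⟨t', M', -, -, rfl⟩
      exact (Finset.card_le_univ M').trans (le_of_eq Finset.card_univ)
    exact le_trans (le_csSup hbdd hmem) hmu
  have hmain := card_tr_le G X k Finset.univ hbud
  set A : Set (Set V) := {S : Set V | ∃ I : Set V, IsMaxIndep G I ∧ S = I ∩ D.bag t} with hA
  have hAfin : A.Finite := Set.toFinite _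
  rw [Set.ncard_eq_toFinset_card A hAfin]
  refine le_trans ?_ hmain
  apply Finset.card_le_card_of_injOn (fun S => S.toFinite.toFinset)
  · intro S hS
    rw [Finset.mem_coe, Set.Finite.mem_toFinset] at hS
    obtain ⟨I, hI, rfl⟩ := hS
    rw [Finset.mem_coe, tr, Finset.mem_filter]
    refine ⟨Finset.mem_univ _, I.toFinite.toFinset, ⟨Finset.subset_univ _, ?_, ?_⟩, ?_⟩
    · intro u hu v hv
      rw [Set.Finite.mem_toFinset] at hu hv
      by_cases huv : u = v
      · subst huv
        exact fun h => G.irrefl h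
      · exact hI.1 u hu v hv huv
    · intro x hxX _ hxJ
      rw [Set.Finite.mem_toFinset] at hxJ
      by_contra hno
      push_neg at hno
      have hind' : ∀ u ∈ insert x I, ∀ v ∈ insert x I, u ≠ v → ¬ G.Adj u v := by
        intro p hp q hq hpq
        rcases Set.mem_insert_iff.mp hp with rfl | hp'
        · rcases Set.mem_insert_iff.mp hq with rfl | hq'
          · exact absurd rfl hpq
          · intro h
            exact hno q ((Set.Finite.mem_toFinset _).mpr hq') h
        · rcases Set.mem_insert_iff.mp hq with rfl | hq'
          · intro h
            exact hno p ((Set.Finite.mem_toFinset _).mpr hp') h.symm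
          · exact hI.1 p hp' q hq' hpq
      have hIeq := hI.2 (insert x I) (Set.subset_insert _ _) hind'
      rw [← hIeq] at hxJ
      exact hxJ (Set.mem_insert _ _)
    · ext v
      rw [Set.Finite.mem_toFinset]
      simp only [Finset.mem_inter, Set.Finite.mem_toFinset, Finset.mem_univ, and_true,
        Set.mem_inter_iff, hXdef]
  · intro S1 h1 S2 h2 he
    have h' := congrArg (fun (s : Finset V) => (s : Set V)) he
    simpa [Set.Finite.coe_toFinset] using h'

end Paper
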